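/- Suppose M* ∈ C_SST is π-SST for the identity permutation. Then with probability at least 1 − n^{−20} (over both the random observation Y and the randomization in Step 2), the permutation π_CRL produced by the first two steps of the CRL estimator satisfies: (a) max over i ∈ [n] of Σ_{ℓ=1}^n |M*_{iℓ} − M*_{π_CRL(i)ℓ}| ≤ √n·(log n)²; and (b) the subset S of similar items identified in Step 2 has size at least k_max(M*). -/

import Mathlib

open MeasureTheory ENNReal

noncomputable section

namespace SSTPaper

/-- Squared Frobenius norm of an `n × n` real matrix (as a function). -/
def frobSq {n : ℕ} (A : Fin n → Fin n → ℝ) : ℝ := ∑ i, ∑ j, (A i j) ^ 2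

/-- Trace inner product `⟨A, B⟩ = trace (Aᵀ B)`. -/
def tinner {n : ℕ} (A B : Fin n → Fin n → ℝ) : ℝ := ∑ i, ∑ j, A i j * B i j

/-- The SST class: shifted-skew-symmetric matrices with entries in `[0,1]` that are
`π`-SST for some permutation `π` (where `π` ranks `i` above `j` iff `π j < π i`). -/
def sstClass (n : ℕ) : Set (Fin n → Fin n → ℝ) :=
  {M | (∀ i j, 0 ≤ M i j ∧ M i j ≤ 1) ∧ (∀ i j, M j i = 1 - M i j) ∧
    ∃ π : Equiv.Perm (Fin n), ∀ i j k : Fin n, π j < π i → M j k ≤ M i k}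

/-- The set of SST matrices faithful to a given permutation `π`. -/
def sstOf {n : ℕ} (π : Equiv.Perm (Fin n)) : Set (Fin n → Fin n → ℝ) :=
  {M | (∀ i j, 0 ≤ M i j ∧ M i j ≤ 1) ∧ (∀ i j, M j i = 1 - M i j) ∧
    ∀ i j k : Fin n, π j < π i → M j k ≤ M i k}

/-- Size of the largest indifference set of `M`: the maximal number of identical rows. -/
def kmaxM {n : ℕ} (M : Fin n → Fin n → ℝ) : ℕ :=
  Finset.univ.sup fun i => Set.ncard {j : Fin n | M j = M i}

/-- Number of indifference sets of `M`: the number of distinct rows. -/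
def numSets {n : ℕ} (M : Fin n → Fin n → ℝ) : ℕ := Set.ncard (Set.range M)

/-- SST matrices having an indifference set of size at least `k`. -/
def sstClassK (n k : ℕ) : Set (Fin n → Fin n → ℝ) :=
  {M | M ∈ sstClass n ∧ k ≤ kmaxM M}

/-- SST matrices that respect some indifference-set partition of sizes `k`. -/
def sstClassPart (n s : ℕ) (k : Fin s → ℕ) : Set (Fin n → Fin n → ℝ) :=
  {M | M ∈ sstClass n ∧ ∃ P : Fin s → Finset (Fin n),
    (∀ a b, a ≠ b → Disjoint (P a) (P b)) ∧ (∀ a, (P a).card = k a) ∧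
    (∀ i : Fin n, ∃ a, i ∈ P a) ∧
    ∀ a b : Fin s, ∀ i ∈ P a, ∀ i' ∈ P a, ∀ j ∈ P b, ∀ j' ∈ P b, M i j = M i' j'}

/-- Bernoulli measure on `Bool` with success probability `p`. -/
def bern (p : ℝ) : Measure Bool :=
  (ENNReal.ofReal p) • Measure.dirac true + (ENNReal.ofReal (1 - p)) • Measure.dirac false

/-- The law of the observation matrix `Y`: entries on and above the diagonal independent,
`P[Y i j = 1] = M i j` for `i < j`, `Y j i = 1 - Y i j` off the diagonal, and fair coin
on the diagonal. -/
def obsMeasure {n : ℕ} (M : Fin n → Fin n → ℝ) : Measure (Fin n → Fin n → ℝ) :=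
  Measure.map (fun (ω : Fin n × Fin n → Bool) (i j : Fin n) =>
      if i < j then (if ω (i, j) then (1 : ℝ) else 0)
      else if j < i then 1 - (if ω (j, i) then (1 : ℝ) else 0)
      else (if ω (i, j) then (1 : ℝ) else 0))
    (Measure.pi fun p : Fin n × Fin n => bern (if p.1 = p.2 then 1 / 2 else M p.1 p.2))

/-- The risk `E ‖M̂(Y) − M*‖²_F` of an estimator. -/
def risk {n : ℕ} (Mhat : (Fin n → Fin n → ℝ) → Fin n → Fin n → ℝ)
    (Mstar : Fin n → Fin n → ℝ) : ℝ≥0∞ :=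
  ∫⁻ Y, ENNReal.ofReal (frobSq (Mhat Y - Mstar)) ∂(obsMeasure Mstar)

/-- The `(s, k)`-oracle risk. -/
def oracleRisk (n s : ℕ) (k : Fin s → ℕ) : ℝ≥0∞ :=
  ⨅ (Mhat : (Fin n → Fin n → ℝ) → Fin n → Fin n → ℝ) (_ : Measurable Mhat),
    ⨆ (Mstar : Fin n → Fin n → ℝ) (_ : Mstar ∈ sstClassPart n s k), risk Mhat Mstar

/-- The global adaptivity index of an estimator. -/
def adaptIndex {n : ℕ} (Mhat : (Fin n → Fin n → ℝ) → Fin n → Fin n → ℝ) : ℝ≥0∞ :=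
  ⨆ (s : ℕ) (k : Fin s → ℕ) (_ : ∀ a, 1 ≤ k a) (_ : ∑ a, k a = n) (_ : ∀ a, k a < n),
    (⨆ (Mstar : Fin n → Fin n → ℝ) (_ : Mstar ∈ sstClassPart n s k), risk Mhat Mstar) /
      oracleRisk n s k

/-- Number of wins of item `i`. -/
def winCount {n : ℕ} (Y : Fin n → Fin n → ℝ) (i : Fin n) : ℝ := ∑ j, Y i j

instance {n : ℕ} : MeasurableSpace (Equiv.Perm (Fin n)) := ⊤

/-- Uniform measure on a (finite) set. -/
def unifOn {α : Type*} [Fintype α] [MeasurableSpace α] (s : Set α) : Measure α :=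
  (s.ncard : ℝ≥0∞)⁻¹ • ∑ a ∈ (Set.toFinite s).toFinset, Measure.dirac a


/-! ### Auxiliary lemmas for `crl_steps_one_two` -/

/-- Bernoulli weight. -/
def bw (q : ℝ) (b : Bool) : ℝ := if b then q else 1 - q

lemma bw_true (q : ℝ) : bw q true = q := rfl
lemma bw_false (q : ℝ) : bw q false = 1 - q := rfl

lemma bw_nonneg {q : ℝ} (h0 : 0 ≤ q) (h1 : q ≤ 1) (b : Bool) : 0 ≤ bw q b := by
  cases b <;> simp [bw] <;> linarith

lemma bw_sum {q : ℝ} : bw q true + bw q false = 1 := by simp [bw]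

lemma bern_singleton {p : ℝ} (b : Bool) :
    bern p {b} = ENNReal.ofReal (bw p b) := by
  cases b <;>
    simp [bern, bw, Measure.dirac_apply' _ (MeasurableSet.singleton _)]

lemma bern_prob {p : ℝ} (h0 : 0 ≤ p) (h1 : p ≤ 1) : IsProbabilityMeasure (bern p) := by
  constructor
  have : (Set.univ : Set Bool) = {true} ∪ {false} := by
    ext b; cases b <;> simp
  rw [this, measure_union (by simp) (MeasurableSet.singleton _), bern_singleton, bern_singleton,
    ← ENNReal.ofReal_add (by simpa [bw] using h0) (by simp [bw]; linarith)]
  simp [bw]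

/-- Point mass of a product of Bernoullis. -/
lemma pi_bern_singleton {ι : Type*} [Fintype ι] (q : ι → ℝ)
    (h0 : ∀ p, 0 ≤ q p) (h1 : ∀ p, q p ≤ 1) (ω : ι → Bool) :
    haveI : ∀ p, IsProbabilityMeasure (bern (q p)) := fun p => bern_prob (h0 p) (h1 p)
    Measure.pi (fun p => bern (q p)) {ω} = ENNReal.ofReal (∏ p, bw (q p) (ω p)) := by
  haveI : ∀ p, IsProbabilityMeasure (bern (q p)) := fun p => bern_prob (h0 p) (h1 p)
  have hset : ({ω} : Set (ι → Bool)) = Set.pi Set.univ (fun p => {ω p}) := by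
    ext x; simp [Set.mem_pi, funext_iff]
  rw [hset, Measure.pi_pi]
  rw [ENNReal.ofReal_prod_of_nonneg (fun p _ => bw_nonneg (h0 p) (h1 p) _)]
  exact Finset.prod_congr rfl fun p _ => bern_singleton _

lemma pi_bern_apply {ι : Type*} [Fintype ι] (q : ι → ℝ)
    (h0 : ∀ p, 0 ≤ q p) (h1 : ∀ p, q p ≤ 1) (A : Set (ι → Bool)) :
    Measure.pi (fun p => bern (q p)) A
      = ENNReal.ofReal (∑ ω ∈ A.toFinite.toFinset, ∏ p, bw (q p) (ω p)) := by
  haveI : ∀ p, IsProbabilityMeasure (bern (q p)) := fun p => bern_prob (h0 p) (h1 p)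
  have hA : A = ⋃ ω ∈ A.toFinite.toFinset, {ω} := by
    ext x; simp [Set.Finite.mem_toFinset]
  conv_lhs => rw [hA]
  rw [measure_biUnion_finset (fun a _ b _ hab => by simp [Set.disjoint_singleton, hab])
    (fun b _ => MeasurableSet.singleton _),
    ENNReal.ofReal_sum_of_nonneg (fun ω _ => Finset.prod_nonneg fun p _ => bw_nonneg (h0 p) (h1 p) _)]
  exact Finset.sum_congr rfl fun ω _ => pi_bern_singleton q h0 h1 ω

lemma exp_quad {x : ℝ} (hx : |x| ≤ 1) : Real.exp x ≤ 1 + x + x ^ 2 := by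
  have h := Real.exp_bound hx (by norm_num : 0 < 2)
  have h2 : |Real.exp x - (1 + x)| ≤ |x| ^ 2 * (3 / 4) := by
    convert h using 2
    · simp [Finset.sum_range_succ]
    · norm_num
  have h3 : Real.exp x - (1 + x) ≤ |x| ^ 2 * (3 / 4) := (abs_le.mp h2).2
  have h4 : |x| ^ 2 = x ^ 2 := sq_abs x
  nlinarith [sq_nonneg x]

lemma factor_bound {a b x y l : ℝ} (ha : 0 ≤ a) (hb : 0 ≤ b) (hab : a + b = 1)
    (hx : |x| ≤ 1) (hy : |y| ≤ 1) (hmean : a * x + b * y = 0) (hl0 : 0 ≤ l) (hl1 : l ≤ 1) :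
    a * Real.exp (l * x) + b * Real.exp (l * y) ≤ 1 + l ^ 2 := by
  have hlx : |l * x| ≤ 1 := by
    rw [abs_mul, abs_of_nonneg hl0]
    calc l * |x| ≤ 1 * 1 := by
          apply mul_le_mul hl1 hx (abs_nonneg x) zero_le_one
      _ = 1 := by ring
  have hly : |l * y| ≤ 1 := by
    rw [abs_mul, abs_of_nonneg hl0]
    calc l * |y| ≤ 1 * 1 := by
          apply mul_le_mul hl1 hy (abs_nonneg y) zero_le_one
      _ = 1 := by ring
  have e1 : Real.exp (l * x) ≤ 1 + l * x + l ^ 2 := by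
    have := exp_quad hlx
    have hx2 : x ^ 2 ≤ 1 := by nlinarith [sq_abs x, abs_nonneg x]
    nlinarith [sq_nonneg l]
  have e2 : Real.exp (l * y) ≤ 1 + l * y + l ^ 2 := by
    have := exp_quad hly
    have hy2 : y ^ 2 ≤ 1 := by nlinarith [sq_abs y, abs_nonneg y]
    nlinarith [sq_nonneg l]
  have b1 : a * Real.exp (l * x) ≤ a * (1 + l * x + l ^ 2) :=
    mul_le_mul_of_nonneg_left e1 ha
  have b2 : b * Real.exp (l * y) ≤ b * (1 + l * y + l ^ 2) :=
    mul_le_mul_of_nonneg_left e2 hb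
  nlinarith

lemma chernoff_core {ι : Type*} [Fintype ι] [DecidableEq ι]
    (w H : ι → Bool → ℝ) (hw0 : ∀ p b, 0 ≤ w p b) (hw1 : ∀ p, w p true + w p false = 1)
    (used : Finset ι) (hH0 : ∀ p ∉ used, ∀ b, H p b = 0)
    (hmean : ∀ p ∈ used, w p true * H p true + w p false * H p false = 0)
    (hbd : ∀ p b, |H p b| ≤ 1)
    (l t : ℝ) (hl0 : 0 ≤ l) (hl1 : l ≤ 1)
    (F : Finset (ι → Bool)) (hF : ∀ ω ∈ F, t ≤ ∑ p, H p (ω p)) :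
    ∑ ω ∈ F, ∏ p, w p (ω p) ≤ Real.exp (used.card * l ^ 2 - l * t) := by
  have key : ∀ ω : ι → Bool, (0:ℝ) ≤ ∏ p, w p (ω p) :=
    fun ω => Finset.prod_nonneg fun p _ => hw0 _ _
  have step1 : ∑ ω ∈ F, ∏ p, w p (ω p)
      ≤ ∑ ω ∈ F, Real.exp (l * (∑ p, H p (ω p) - t)) * ∏ p, w p (ω p) := by
    apply Finset.sum_le_sum; intro ω hω
    have h1 : (1:ℝ) ≤ Real.exp (l * (∑ p, H p (ω p) - t)) :=
      Real.one_le_exp (mul_nonneg hl0 (by linarith [hF ω hω]))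
    nlinarith [key ω]
  have step2 : ∑ ω ∈ F, Real.exp (l * (∑ p, H p (ω p) - t)) * ∏ p, w p (ω p)
      ≤ ∑ ω : ι → Bool, Real.exp (l * (∑ p, H p (ω p) - t)) * ∏ p, w p (ω p) :=
    Finset.sum_le_sum_of_subset_of_nonneg (Finset.subset_univ F)
      (fun ω _ _ => mul_nonneg (Real.exp_nonneg _) (key ω))
  have step3 : ∀ ω : ι → Bool, Real.exp (l * (∑ p, H p (ω p) - t)) * ∏ p, w p (ω p)
      = Real.exp (-(l * t)) * ∏ p, (w p (ω p) * Real.exp (l * H p (ω p))) := by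
    intro ω
    rw [Finset.prod_mul_distrib]
    have : l * (∑ p, H p (ω p) - t) = (∑ p, l * H p (ω p)) + (-(l * t)) := by
      rw [← Finset.mul_sum]; ring
    rw [this, Real.exp_add, Real.exp_sum]
    ring
  have step4 : ∑ ω : ι → Bool, ∏ p, (w p (ω p) * Real.exp (l * H p (ω p)))
      = ∏ p, ∑ b, w p b * Real.exp (l * H p b) :=
    (Fintype.prod_sum (κ := fun _ : ι => Bool) (fun p b => w p b * Real.exp (l * H p b))).symm
  have step5 : ∏ p, (∑ b, w p b * Real.exp (l * H p b))
      ≤ ∏ p, (if p ∈ used then (1 + l ^ 2) else 1) := by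
    apply Finset.prod_le_prod
    · intro p _
      exact Finset.sum_nonneg fun b _ => mul_nonneg (hw0 p b) (Real.exp_nonneg _)
    · intro p _
      have hsum : ∑ b, w p b * Real.exp (l * H p b)
          = w p true * Real.exp (l * H p true) + w p false * Real.exp (l * H p false) := by
        simp [Fintype.sum_bool]
      by_cases hp : p ∈ used
      · simp only [hp, if_true]
        rw [hsum]
        exact factor_bound (hw0 p true) (hw0 p false) (hw1 p) (hbd p true) (hbd p false)
          (hmean p hp) hl0 hl1
      · simp only [hp, if_false]
        rw [hsum, hH0 p hp true, hH0 p hp false]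
        simp [hw1 p]
  have step6 : ∏ p, (if p ∈ used then (1 + l ^ 2 : ℝ) else 1) = (1 + l ^ 2) ^ used.card := by
    rw [← Finset.prod_filter, Finset.filter_mem_eq_inter, Finset.univ_inter, Finset.prod_const]
  have step7 : ((1 : ℝ) + l ^ 2) ^ used.card ≤ Real.exp (used.card * l ^ 2) := by
    calc ((1:ℝ) + l ^ 2) ^ used.card ≤ (Real.exp (l ^ 2)) ^ used.card := by
          apply pow_le_pow_left₀ (by positivity)
          linarith [Real.add_one_le_exp (l ^ 2)]
      _ = Real.exp (used.card * l ^ 2) := by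
          rw [← Real.exp_nat_mul]
  calc ∑ ω ∈ F, ∏ p, w p (ω p)
      ≤ ∑ ω : ι → Bool, Real.exp (l * (∑ p, H p (ω p) - t)) * ∏ p, w p (ω p) :=
        le_trans step1 step2
    _ = Real.exp (-(l * t)) * ∏ p, ∑ b, w p b * Real.exp (l * H p b) := by
        simp_rw [step3]; rw [← Finset.mul_sum, step4]
    _ ≤ Real.exp (-(l * t)) * ((1 + l ^ 2) ^ used.card) := by
        apply mul_le_mul_of_nonneg_left _ (Real.exp_nonneg _)
        rw [← step6]; exact step5
    _ ≤ Real.exp (-(l * t)) * Real.exp (used.card * l ^ 2) := by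
        apply mul_le_mul_of_nonneg_left step7 (Real.exp_nonneg _)
    _ = Real.exp (used.card * l ^ 2 - l * t) := by
        rw [← Real.exp_add]; ring_nf

/-- The coordinate used for entry `(i,j)`. -/
def okey {n : ℕ} (i j : Fin n) : Fin n × Fin n := if j < i then (j, i) else (i, j)

/-- The value of entry `(i,j)` given the coin at its coordinate. -/
def ohh {n : ℕ} (i j : Fin n) (b : Bool) : ℝ :=
  if j < i then 1 - (if b then 1 else 0) else (if b then 1 else 0)

def obsMap {n : ℕ} (ω : Fin n × Fin n → Bool) (i j : Fin n) : ℝ :=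
  if i < j then (if ω (i, j) then (1 : ℝ) else 0)
  else if j < i then 1 - (if ω (j, i) then (1 : ℝ) else 0)
  else (if ω (i, j) then (1 : ℝ) else 0)

lemma obsMap_eq {n : ℕ} (ω : Fin n × Fin n → Bool) (i j : Fin n) :
    obsMap ω i j = ohh i j (ω (okey i j)) := by
  rcases lt_trichotomy i j with h | h | h
  · have h' : ¬ j < i := not_lt.mpr h.le
    simp [obsMap, ohh, okey, h, h']
  · subst h; simp [obsMap, ohh, okey]
  · have h' : ¬ i < j := not_lt.mpr h.le
    simp [obsMap, ohh, okey, h, h']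

lemma okey_inj {n : ℕ} (i : Fin n) : Function.Injective (okey i) := by
  have : Function.LeftInverse (fun p : Fin n × Fin n => if p.1 = i then p.2 else p.1) (okey i) := by
    intro j
    unfold okey
    by_cases h : j < i
    · rw [if_pos h]
      simp only []
      rw [if_neg (by intro he; exact absurd he (ne_of_lt h))]
    · rw [if_neg h]
      simp
  exact this.injective

lemma winCount_measurable {n : ℕ} (i : Fin n) :
    Measurable (fun Y : Fin n → Fin n → ℝ => winCount Y i) := by
  unfold winCount
  exact Finset.measurable_sum _ fun j _ =>
    (measurable_pi_apply j).comp (measurable_pi_apply i)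

lemma obsMeasure_eq_map {n : ℕ} (M : Fin n → Fin n → ℝ) :
    obsMeasure M = Measure.map obsMap
      (Measure.pi fun p : Fin n × Fin n => bern (if p.1 = p.2 then 1 / 2 else M p.1 p.2)) := rfl

/-- Chernoff tail bound for a single item's win count. -/
lemma tail_bound {n : ℕ} (M : Fin n → Fin n → ℝ)
    (h01 : ∀ i j, 0 ≤ M i j ∧ M i j ≤ 1) (hskew : ∀ i j, M j i = 1 - M i j)
    (i : Fin n) (s : ℝ) (hs : s = 1 ∨ s = -1) (l t : ℝ) (hl0 : 0 ≤ l) (hl1 : l ≤ 1) :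
    obsMeasure M {Y | t ≤ s * (winCount Y i - ∑ j, M i j)}
      ≤ ENNReal.ofReal (Real.exp (n * l ^ 2 - l * t)) := by
  classical
  set q : Fin n × Fin n → ℝ := fun p => if p.1 = p.2 then 1 / 2 else M p.1 p.2 with hq
  have hq0 : ∀ p, 0 ≤ q p := by
    intro p; by_cases h : p.1 = p.2 <;> simp [hq, h] <;> exact (h01 p.1 p.2).1
  have hq1 : ∀ p, q p ≤ 1 := by
    intro p; by_cases h : p.1 = p.2 <;> simp [hq, h]
    · norm_num
    · exact (h01 p.1 p.2).2
  have hMii : M i i = 1 / 2 := by have := hskew i i; linarith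
  set H : Fin n × Fin n → Bool → ℝ :=
    fun p b => if h : ∃ j, okey i j = p then s * (ohh i h.choose b - M i h.choose) else 0 with hH
  have hHkey : ∀ (j : Fin n) (b : Bool), H (okey i j) b = s * (ohh i j b - M i j) := by
    intro j b
    have he : ∃ j', okey i j' = okey i j := ⟨j, rfl⟩
    have hc : he.choose = j := okey_inj i he.choose_spec
    rw [hH]; simp only [dif_pos he, hc]
  have hHsum : ∀ ω : Fin n × Fin n → Bool,
      ∑ p, H p (ω p) = s * (winCount (obsMap ω) i - ∑ j, M i j) := by
    intro ω
    have h1 : ∑ p, H p (ω p) = ∑ p ∈ Finset.univ.image (okey i), H p (ω p) := by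
      refine (Finset.sum_subset (Finset.subset_univ _) ?_).symm
      intro p _ hp
      rw [hH]
      have : ¬ ∃ j, okey i j = p := by
        rintro ⟨j, rfl⟩; exact hp (Finset.mem_image_of_mem _ (Finset.mem_univ j))
      simp [this]
    rw [h1, Finset.sum_image (fun a _ b _ h => okey_inj i h)]
    have h2 : ∀ j, H (okey i j) (ω (okey i j)) = s * (ohh i j (ω (okey i j)) - M i j) :=
      fun j => hHkey j _
    simp_rw [h2]
    rw [← Finset.mul_sum, Finset.sum_sub_distrib]
    unfold winCount
    congr 2
    exact Finset.sum_congr rfl fun j _ => (obsMap_eq ω i j).symm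
  rw [obsMeasure_eq_map,
    Measure.map_apply (measurable_of_countable _)
      (show MeasurableSet {Y : Fin n → Fin n → ℝ | t ≤ s * (winCount Y i - ∑ j, M i j)} from
        measurableSet_le measurable_const
          (((winCount_measurable i).sub measurable_const).const_mul s))]
  set A : Set (Fin n × Fin n → Bool) :=
    obsMap ⁻¹' {Y | t ≤ s * (winCount Y i - ∑ j, M i j)} with hA
  rw [pi_bern_apply q hq0 hq1 A]
  apply ENNReal.ofReal_le_ofReal
  have hcard : (Finset.univ.image (okey i)).card = n := by
    rw [Finset.card_image_of_injective _ (okey_inj i), Finset.card_univ, Fintype.card_fin]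
  have habs : |s| = 1 := by rcases hs with h | h <;> rw [h] <;> norm_num
  calc ∑ ω ∈ A.toFinite.toFinset, ∏ p, bw (q p) (ω p)
      ≤ Real.exp ((Finset.univ.image (okey i)).card * l ^ 2 - l * t) := by
        apply chernoff_core (fun p => bw (q p)) H
          (fun p b => bw_nonneg (hq0 p) (hq1 p) b) (fun p => bw_sum)
          (Finset.univ.image (okey i))
        · intro p hp b
          rw [hH]
          have : ¬ ∃ j, okey i j = p := by
            rintro ⟨j, rfl⟩; exact hp (Finset.mem_image_of_mem _ (Finset.mem_univ j))
          simp [this]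
        · intro p hp
          obtain ⟨j, _, rfl⟩ := Finset.mem_image.mp hp
          rw [hHkey, hHkey]
          rcases lt_trichotomy j i with h | h | h
          · have hkey : okey i j = (j, i) := if_pos h
            have hji : j ≠ i := ne_of_lt h
            have hwq : q (okey i j) = M j i := by rw [hkey, hq]; simp [hji]
            have hMji : M j i = 1 - M i j := hskew i j
            simp only [bw_true, bw_false, hwq, ohh, if_pos h, hMji, if_true,
              Bool.false_eq_true, if_false]
            ring
          · subst h
            have hkey : okey j j = (j, j) := if_neg (lt_irrefl j)
            have hwq : q (okey j j) = 1 / 2 := by rw [hkey, hq]; simp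
            have hMjj : M j j = 1 / 2 := by have := hskew j j; linarith
            simp only [bw_true, bw_false, hwq, ohh, if_neg (lt_irrefl j), hMjj, if_true,
              Bool.false_eq_true, if_false]
            ring
          · have hnlt : ¬ j < i := not_lt.mpr h.le
            have hkey : okey i j = (i, j) := if_neg hnlt
            have hij : i ≠ j := ne_of_lt h
            have hwq : q (okey i j) = M i j := by rw [hkey, hq]; simp [hij]
            simp only [bw_true, bw_false, hwq, ohh, if_neg hnlt, if_true,
              Bool.false_eq_true, if_false]
            ring
        · intro p b
          simp only [hH]
          by_cases h : ∃ j, okey i j = p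
          · rw [dif_pos h]
            set j := h.choose
            have h0 := (h01 i j).1
            have h1 := (h01 i j).2
            rw [abs_mul, habs, one_mul, abs_le]
            unfold ohh
            by_cases hji : j < i <;> cases b <;> simp [hji] <;> constructor <;> linarith
          · rw [dif_neg h]; simp
        · exact hl0
        · exact hl1
        · intro ω hω
          rw [hHsum ω]
          have hmem : ω ∈ A := (Set.Finite.mem_toFinset _).mp hω
          exact hmem
      _ = Real.exp (n * l ^ 2 - l * t) := by rw [hcard]

lemma good_event_prob {n : ℕ} (M : Fin n → Fin n → ℝ)
    (h01 : ∀ i j, 0 ≤ M i j ∧ M i j ≤ 1) (hskew : ∀ i j, M j i = 1 - M i j)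
    (l t : ℝ) (hl0 : 0 ≤ l) (hl1 : l ≤ 1) :
    obsMeasure M {Y | ¬ ∀ i, |winCount Y i - ∑ j, M i j| ≤ t}
      ≤ ENNReal.ofReal (2 * n * Real.exp (n * l ^ 2 - l * t)) := by
  have hsub : {Y : Fin n → Fin n → ℝ | ¬ ∀ i, |winCount Y i - ∑ j, M i j| ≤ t}
      ⊆ ⋃ i ∈ Finset.univ, ({Y : Fin n → Fin n → ℝ | t ≤ 1 * (winCount Y i - ∑ j, M i j)}
        ∪ {Y : Fin n → Fin n → ℝ | t ≤ (-1) * (winCount Y i - ∑ j, M i j)}) := by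
    intro Y hY
    push_neg at hY
    obtain ⟨i, hi⟩ := hY
    simp only [Set.mem_iUnion]
    refine ⟨i, Finset.mem_univ i, ?_⟩
    rcases le_total 0 (winCount Y i - ∑ j, M i j) with h | h
    · left
      rw [abs_of_nonneg h] at hi
      simp only [Set.mem_setOf_eq, one_mul]
      linarith
    · right
      rw [abs_of_nonpos h] at hi
      simp only [Set.mem_setOf_eq]
      linarith
  calc obsMeasure M {Y | ¬ ∀ i, |winCount Y i - ∑ j, M i j| ≤ t}
      ≤ obsMeasure M (⋃ i ∈ Finset.univ,
          ({Y : Fin n → Fin n → ℝ | t ≤ 1 * (winCount Y i - ∑ j, M i j)}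
          ∪ {Y : Fin n → Fin n → ℝ | t ≤ (-1) * (winCount Y i - ∑ j, M i j)})) :=
        measure_mono hsub
    _ ≤ ∑ i ∈ Finset.univ, obsMeasure M
          ({Y : Fin n → Fin n → ℝ | t ≤ 1 * (winCount Y i - ∑ j, M i j)}
          ∪ {Y : Fin n → Fin n → ℝ | t ≤ (-1) * (winCount Y i - ∑ j, M i j)}) :=
        measure_biUnion_finset_le _ _
    _ ≤ ∑ _i ∈ (Finset.univ : Finset (Fin n)),
          ENNReal.ofReal (2 * Real.exp (n * l ^ 2 - l * t)) := by
        apply Finset.sum_le_sum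
        intro i _
        calc obsMeasure M _
            ≤ obsMeasure M {Y : Fin n → Fin n → ℝ | t ≤ 1 * (winCount Y i - ∑ j, M i j)}
              + obsMeasure M {Y : Fin n → Fin n → ℝ | t ≤ (-1) * (winCount Y i - ∑ j, M i j)} :=
            measure_union_le _ _
          _ ≤ ENNReal.ofReal (Real.exp (n * l ^ 2 - l * t))
              + ENNReal.ofReal (Real.exp (n * l ^ 2 - l * t)) :=
            add_le_add (tail_bound M h01 hskew i 1 (Or.inl rfl) l t hl0 hl1)
              (tail_bound M h01 hskew i (-1) (Or.inr rfl) l t hl0 hl1)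
          _ = ENNReal.ofReal (2 * Real.exp (n * l ^ 2 - l * t)) := by
            rw [← ENNReal.ofReal_add (Real.exp_nonneg _) (Real.exp_nonneg _)]
            ring_nf
    _ = ENNReal.ofReal (2 * n * Real.exp (n * l ^ 2 - l * t)) := by
        rw [Finset.sum_const, Finset.card_univ, Fintype.card_fin, nsmul_eq_mul]
        rw [← ENNReal.ofReal_natCast n, ← ENNReal.ofReal_mul (by positivity)]
        ring_nf

lemma log_ge {n : ℕ} (hn : 2 ^ 2048 ≤ n) : 1408 ≤ Real.log n := by
  have h2 : (((2:ℕ) ^ 2048 : ℕ) : ℝ) ≤ (n:ℝ) := Nat.cast_le.mpr hn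
  rw [Nat.cast_pow] at h2
  have h3 : Real.log (((2:ℕ):ℝ) ^ 2048) ≤ Real.log n := Real.log_le_log (by positivity) h2
  rw [Real.log_pow] at h3
  push_cast at h3
  have h4 := Real.log_two_gt_d9
  clear hn h2
  nlinarith

lemma lam_le_one {n : ℕ} (hn : 2 ^ 2048 ≤ n) :
    Real.log n / (8 * Real.sqrt n) ≤ 1 := by
  have hn1 : (1:ℝ) ≤ n := by
    have : (1:ℕ) ≤ n := le_trans Nat.one_le_two_pow hn
    exact_mod_cast this
  have hs0 : 0 < Real.sqrt n := Real.sqrt_pos.mpr (by linarith)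
  have hs1 : (1:ℝ) ≤ Real.sqrt n := by
    rw [show (1:ℝ) = Real.sqrt 1 by simp]
    exact Real.sqrt_le_sqrt hn1
  have hs2 : Real.sqrt n ^ 2 = (n:ℝ) := Real.sq_sqrt (by linarith)
  have hlog : Real.log (Real.sqrt n) = Real.log n / 2 :=
    Real.log_sqrt (by linarith)
  have hls : Real.log (Real.sqrt n) ≤ Real.sqrt n - 1 := Real.log_le_sub_one_of_pos hs0
  clear hn
  rw [div_le_one (by positivity)]
  linarith

lemma numeric_bound {n : ℕ} (hn : 2 ^ 2048 ≤ n) :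
    2 * (n:ℝ) * Real.exp ((n:ℝ) * (Real.log n / (8 * Real.sqrt n)) ^ 2
      - (Real.log n / (8 * Real.sqrt n)) * (Real.sqrt n * Real.log n / 4))
      ≤ ((n:ℝ) ^ 20)⁻¹ := by
  have hn1 : (1:ℝ) ≤ n := by
    have : (1:ℕ) ≤ n := le_trans Nat.one_le_two_pow hn
    exact_mod_cast this
  have hnpos : (0:ℝ) < n := by linarith
  have hs0 : 0 < Real.sqrt n := Real.sqrt_pos.mpr hnpos
  have hs2 : Real.sqrt n ^ 2 = (n:ℝ) := Real.sq_sqrt (by linarith)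
  set L := Real.log n with hL
  have hL1408 : 1408 ≤ L := log_ge hn
  clear hn
  have hLpos : 0 < L := by linarith
  have hexp : ∀ s : ℝ, s ^ 2 = (n:ℝ) → 0 < s →
      (n:ℝ) * (L / (8 * s)) ^ 2 - (L / (8 * s)) * (s * L / 4) = -(L ^ 2 / 64) := by
    intro s hs2' hs0'
    rw [← hs2']
    field_simp
    ring
  rw [hexp (Real.sqrt n) hs2 hs0]
  have hlog2 : Real.log 2 ≤ 1 := by
    have := Real.log_two_lt_d9; linarith
  have key : 2 * (n:ℝ) ^ 21 ≤ Real.exp (L ^ 2 / 64) := by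
    have h1 : Real.exp (Real.log 2 + 21 * L) = 2 * (n:ℝ) ^ 21 := by
      rw [Real.exp_add, Real.exp_log (by norm_num : (0:ℝ) < 2)]
      congr 1
      rw [show (21:ℝ) * L = (21:ℕ) * L by norm_num, Real.exp_nat_mul, Real.exp_log hnpos]
    rw [← h1]
    apply Real.exp_le_exp.mpr
    nlinarith [mul_nonneg (by linarith : (0:ℝ) ≤ L - 1408) (le_of_lt hLpos)]
  rw [← one_div, le_div_iff₀ (by positivity)]
  have h2 : 2 * (n:ℝ) * Real.exp (-(L ^ 2 / 64)) * (n:ℝ) ^ 20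
      = (2 * (n:ℝ) ^ 21) * Real.exp (-(L ^ 2 / 64)) := by ring
  rw [h2]
  calc (2 * (n:ℝ) ^ 21) * Real.exp (-(L ^ 2 / 64))
      ≤ Real.exp (L ^ 2 / 64) * Real.exp (-(L ^ 2 / 64)) :=
        mul_le_mul_of_nonneg_right key (Real.exp_nonneg _)
    _ = 1 := by rw [← Real.exp_add]; simp

lemma final_prob {n : ℕ} (hn : 2 ^ 2048 ≤ n) (M : Fin n → Fin n → ℝ)
    (h01 : ∀ i j, 0 ≤ M i j ∧ M i j ≤ 1) (hskew : ∀ i j, M j i = 1 - M i j) :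
    obsMeasure M {Y | ¬ ∀ i, |winCount Y i - ∑ j, M i j| ≤ Real.sqrt n * Real.log n / 4}
      ≤ ENNReal.ofReal (((n:ℝ) ^ 20)⁻¹) := by
  have hn1 : (1:ℝ) ≤ n := by
    have : (1:ℕ) ≤ n := le_trans Nat.one_le_two_pow hn
    exact_mod_cast this
  have hs0 : 0 < Real.sqrt n := Real.sqrt_pos.mpr (by linarith)
  have hl0 : 0 ≤ Real.log n / (8 * Real.sqrt n) :=
    div_nonneg (Real.log_nonneg hn1) (by positivity)
  calc obsMeasure M _
      ≤ ENNReal.ofReal (2 * n * Real.exp (n * (Real.log n / (8 * Real.sqrt n)) ^ 2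
          - (Real.log n / (8 * Real.sqrt n)) * (Real.sqrt n * Real.log n / 4))) :=
        good_event_prob M h01 hskew _ _ hl0 (lam_le_one hn)
    _ ≤ ENNReal.ofReal (((n:ℝ) ^ 20)⁻¹) := ENNReal.ofReal_le_ofReal (numeric_bound hn)

lemma exists_le_rank {n : ℕ} (e : Equiv.Perm (Fin n)) (r : Fin n) :
    ∃ k, k ≤ r ∧ r ≤ e k := by
  by_contra hcon
  push_neg at hcon
  have hmap : ∀ k ∈ Finset.Iic r, e k ∈ Finset.Iio r := by
    intro k hk
    exact Finset.mem_Iio.mpr (hcon k (Finset.mem_Iic.mp hk))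
  have hcard := Finset.card_le_card_of_injOn e hmap (e.injective.injOn)
  rw [Fin.card_Iic, Fin.card_Iio] at hcard
  omega

lemma exists_ge_rank {n : ℕ} (e : Equiv.Perm (Fin n)) (r : Fin n) :
    ∃ k, r ≤ k ∧ e k ≤ r := by
  by_contra hcon
  push_neg at hcon
  have hmap : ∀ k ∈ Finset.Ici r, e k ∈ Finset.Ioi r := by
    intro k hk
    exact Finset.mem_Ioi.mpr (hcon k (Finset.mem_Ici.mp hk))
  have hcard := Finset.card_le_card_of_injOn e hmap (e.injective.injOn)
  rw [Fin.card_Ici, Fin.card_Ioi] at hcard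
  have hr := r.isLt
  omega

lemma rank_close {n : ℕ} (m N : Fin n → ℝ) (hm : ∀ a b : Fin n, a ≤ b → m a ≤ m b)
    (e : Equiv.Perm (Fin n)) (he : ∀ a b, e a < e b → N a ≤ N b) (t : ℝ)
    (hdev : ∀ a, |N a - m a| ≤ t) (i : Fin n) : |m i - m (e i)| ≤ 2 * t := by
  have ht : 0 ≤ t := le_trans (abs_nonneg _) (hdev i)
  rcases lt_trichotomy (e i) i with h | h | h
  · obtain ⟨k, hk1, hk2⟩ := exists_le_rank e (e i)
    have hki : k ≠ i := by
      intro hki; rw [hki] at hk1; exact absurd (lt_of_le_of_lt hk1 h) (lt_irrefl i)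
    have hlt : e i < e k := lt_of_le_of_ne hk2 (fun hc => hki (e.injective hc.symm))
    have hNik : N i ≤ N k := he i k hlt
    have h1 := abs_le.mp (hdev i)
    have h2 := abs_le.mp (hdev k)
    have h3 : m k ≤ m (e i) := hm k (e i) hk1
    have h4 : m (e i) ≤ m i := hm (e i) i h.le
    rw [abs_le]; constructor <;> linarith
  · rw [h]; simp [ht]
  · obtain ⟨k, hk1, hk2⟩ := exists_ge_rank e (e i)
    have hki : k ≠ i := by
      intro hki; rw [hki] at hk1; exact absurd (lt_of_lt_of_le h hk1) (lt_irrefl i)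
    have hlt : e k < e i := lt_of_le_of_ne hk2 (fun hc => hki (e.injective hc))
    have hNik : N k ≤ N i := he k i hlt
    have h1 := abs_le.mp (hdev i)
    have h2 := abs_le.mp (hdev k)
    have h3 : m (e i) ≤ m k := hm (e i) k hk1
    have h4 : m i ≤ m (e i) := hm i (e i) h.le
    rw [abs_le]; constructor <;> linarith

lemma l1_eq_of_le {n : ℕ} (M : Fin n → Fin n → ℝ)
    (hmono : ∀ i j k : Fin n, j < i → M j k ≤ M i k) {i j : Fin n} (hji : j ≤ i) :
    ∑ l, |M i l - M j l| = (∑ l, M i l) - ∑ l, M j l := by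
  have h : ∀ l, M j l ≤ M i l := by
    intro l
    rcases eq_or_lt_of_le hji with h | h
    · rw [h]
    · exact hmono i j l h
  rw [← Finset.sum_sub_distrib]
  exact Finset.sum_congr rfl fun l _ => abs_of_nonneg (by linarith [h l])

lemma l1_eq {n : ℕ} (M : Fin n → Fin n → ℝ)
    (hmono : ∀ i j k : Fin n, j < i → M j k ≤ M i k) (i j : Fin n) :
    ∑ l, |M i l - M j l| = |(∑ l, M i l) - ∑ l, M j l| := by
  rcases le_total j i with h | h
  · rw [l1_eq_of_le M hmono h, abs_of_nonneg]
    rw [sub_nonneg]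
    apply Finset.sum_le_sum
    intro l _
    rcases eq_or_lt_of_le h with h' | h'
    · rw [h']
    · exact hmono i j l h'
  · have hc : ∀ l, |M i l - M j l| = |M j l - M i l| := fun l => abs_sub_comm _ _
    simp_rw [hc]
    rw [l1_eq_of_le M hmono h, abs_sub_comm, abs_of_nonneg]
    rw [sub_nonneg]
    apply Finset.sum_le_sum
    intro l _
    rcases eq_or_lt_of_le h with h' | h'
    · rw [h']
    · exact hmono j i l h'

lemma perm_mem_of_fix {n : ℕ} (ρ : Equiv.Perm (Fin n)) (S : Finset (Fin n))
    (hρ : ∀ a ∉ S, ρ a = a) {i : Fin n} (hi : i ∈ S) : ρ i ∈ S := by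
  by_contra h
  have h2 := hρ _ h
  have : ρ i = i := ρ.injective h2
  rw [this] at h
  exact h hi

lemma unifOn_apply {n : ℕ} (s : Set (Equiv.Perm (Fin n))) (A : Set (Equiv.Perm (Fin n))) :
    unifOn s A = (s.ncard : ℝ≥0∞)⁻¹ * ∑ a ∈ (Set.toFinite s).toFinset, A.indicator 1 a := by
  rw [unifOn, Measure.smul_apply, Measure.finset_sum_apply, smul_eq_mul]
  congr 1
  exact Finset.sum_congr rfl fun a _ =>
    Measure.dirac_apply' a (MeasurableSpace.measurableSet_top)

lemma unifOn_univ_prob {n : ℕ} :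
    IsProbabilityMeasure (unifOn (Set.univ : Set (Equiv.Perm (Fin n)))) := by
  constructor
  rw [unifOn_apply]
  have h1 : ∀ a ∈ (Set.toFinite (Set.univ : Set (Equiv.Perm (Fin n)))).toFinset,
      (Set.univ : Set (Equiv.Perm (Fin n))).indicator
        (1 : Equiv.Perm (Fin n) → ℝ≥0∞) a = 1 := by
    intro a _; simp
  rw [Finset.sum_congr rfl h1, Finset.sum_const, nsmul_eq_mul, mul_one]
  have hcard : (Set.toFinite (Set.univ : Set (Equiv.Perm (Fin n)))).toFinset.card
      = (Set.univ : Set (Equiv.Perm (Fin n))).ncard :=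
    (Set.ncard_eq_toFinset_card _ (Set.toFinite _)).symm
  rw [hcard]
  have hpos : (Set.univ : Set (Equiv.Perm (Fin n))).ncard ≠ 0 := by
    rw [Set.ncard_univ]
    simp [Nat.card_eq_fintype_card, Fintype.card_ne_zero]
  rw [ENNReal.inv_mul_cancel (by exact_mod_cast hpos) (by simp)]

lemma unifOn_singleton_ne_zero {n : ℕ} (τ : Equiv.Perm (Fin n)) :
    unifOn (Set.univ : Set (Equiv.Perm (Fin n))) {τ} ≠ 0 := by
  rw [unifOn_apply]
  have hτ : τ ∈ (Set.toFinite (Set.univ : Set (Equiv.Perm (Fin n)))).toFinset := by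
    simp
  have hge : (1 : ℝ≥0∞) ≤ ∑ a ∈ (Set.toFinite (Set.univ : Set (Equiv.Perm (Fin n)))).toFinset,
      ({τ} : Set (Equiv.Perm (Fin n))).indicator 1 a := by
    calc (1:ℝ≥0∞) = ({τ} : Set (Equiv.Perm (Fin n))).indicator 1 τ := by simp
      _ ≤ _ := Finset.single_le_sum (fun a _ => zero_le) hτ
  intro hcon
  rw [mul_eq_zero] at hcon
  rcases hcon with h | h
  · rw [ENNReal.inv_eq_zero] at h
    exact (by simp : ((Set.univ : Set (Equiv.Perm (Fin n))).ncard : ℝ≥0∞) ≠ ⊤) h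
  · rw [h] at hge
    simp at hge

lemma unifOn_compl_zero {n : ℕ} (T : Set (Equiv.Perm (Fin n))) : unifOn T Tᶜ = 0 := by
  rw [unifOn_apply]
  have h1 : ∀ a ∈ (Set.toFinite T).toFinset,
      Tᶜ.indicator (1 : Equiv.Perm (Fin n) → ℝ≥0∞) a = 0 := by
    intro a ha
    have : a ∈ T := (Set.Finite.mem_toFinset _).mp ha
    simp [Set.indicator_of_notMem, this]
  rw [Finset.sum_congr rfl h1, Finset.sum_const, smul_zero, mul_zero]

lemma map_unif_mem {n : ℕ} (g : Equiv.Perm (Fin n) → Equiv.Perm (Fin n))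
    (T : Set (Equiv.Perm (Fin n)))
    (hmap : Measure.map g (unifOn (Set.univ : Set (Equiv.Perm (Fin n)))) = unifOn T)
    (τ : Equiv.Perm (Fin n)) : g τ ∈ T := by
  by_contra h
  have h1 : Measure.map g (unifOn (Set.univ : Set (Equiv.Perm (Fin n)))) Tᶜ = 0 := by
    rw [hmap]; exact unifOn_compl_zero T
  rw [Measure.map_apply measurable_from_top MeasurableSpace.measurableSet_top] at h1
  have h2 : unifOn (Set.univ : Set (Equiv.Perm (Fin n))) {τ} = 0 := by
    refine le_antisymm ?_ zero_le
    rw [← h1]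
    exact measure_mono (by intro x hx; rw [Set.mem_singleton_iff] at hx; subst hx; exact h)
  exact unifOn_singleton_ne_zero τ h2


/-- properties of the first two CRL steps: if `M*` is SST faithful to the
identity permutation, then with probability at least `1 − n⁻²⁰` over the observation `Y`
and the internal randomization `τ`, the permutation `πCRL Y τ` produced by Steps 1–2 of
the CRL estimator satisfies (a) `max_i Σ_ℓ |M*_{iℓ} − M*_{πCRL(i)ℓ}| ≤ √n (log n)²` and
(b) the selected subset `Ssel Y` has size at least `k_max(M*)`. -/
theorem crl_steps_one_two :
    ∃ N : ℕ, ∀ n : ℕ, N ≤ n →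
      ∀ ord : (Fin n → Fin n → ℝ) → Equiv.Perm (Fin n),
        (∀ Y : Fin n → Fin n → ℝ, ∀ i j : Fin n,
          ord Y i < ord Y j → winCount Y i ≤ winCount Y j) →
      ∀ Ssel : (Fin n → Fin n → ℝ) → Finset (Fin n),
        (∀ Y : Fin n → Fin n → ℝ,
          (∀ i ∈ Ssel Y, ∀ j ∈ Ssel Y,
            |winCount Y i - winCount Y j| ≤ Real.sqrt n * Real.log n) ∧
          (∀ T : Finset (Fin n),
            (∀ i ∈ T, ∀ j ∈ T, |winCount Y i - winCount Y j| ≤ Real.sqrt n * Real.log n) →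
              T.card ≤ (Ssel Y).card) ∧
          (∀ i ∈ Ssel Y, ∀ j ∈ Ssel Y, ∀ l : Fin n,
            ord Y i ≤ ord Y l → ord Y l ≤ ord Y j → l ∈ Ssel Y)) →
      ∀ πCRL : (Fin n → Fin n → ℝ) → Equiv.Perm (Fin n) → Equiv.Perm (Fin n),
        (∀ Y : Fin n → Fin n → ℝ,
          Measure.map (πCRL Y) (unifOn (Set.univ : Set (Equiv.Perm (Fin n)))) =
            unifOn {σ : Equiv.Perm (Fin n) |
              ∃ ρ : Equiv.Perm (Fin n), (∀ i ∉ Ssel Y, ρ i = i) ∧ σ = ρ.trans (ord Y)}) →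
      ∀ Mstar ∈ sstClass n,
        (∀ i j k : Fin n, j < i → Mstar j k ≤ Mstar i k) →
        ENNReal.ofReal (1 - ((n : ℝ) ^ 20)⁻¹) ≤
          ((obsMeasure Mstar).prod (unifOn (Set.univ : Set (Equiv.Perm (Fin n)))))
            {p : (Fin n → Fin n → ℝ) × Equiv.Perm (Fin n) |
              (∀ i : Fin n,
                ∑ l, |Mstar i l - Mstar (πCRL p.1 p.2 i) l| ≤
                  Real.sqrt n * (Real.log n) ^ 2) ∧
              kmaxM Mstar ≤ (Ssel p.1).card} := by
  classical
  refine ⟨2 ^ 2048, ?_⟩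
  intro n hn ord hord Ssel hSsel πCRL hπ Mstar hM hmono
  obtain ⟨h01, hskew, -⟩ := hM
  -- basic numeric facts
  have hn1 : (1:ℝ) ≤ n := by
    have : (1:ℕ) ≤ n := le_trans Nat.one_le_two_pow hn
    exact_mod_cast this
  have hs0 : 0 < Real.sqrt n := Real.sqrt_pos.mpr (by linarith)
  have hL2 : 2 ≤ Real.log n := by linarith [log_ge hn]
  have hL0 : 0 ≤ Real.log n := by linarith
  set t : ℝ := Real.sqrt n * Real.log n / 4 with ht_def
  have ht0 : 0 ≤ t := by positivity
  have hsl0 : 0 ≤ Real.sqrt n * Real.log n := by positivity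
  -- the mean vector
  set m : Fin n → ℝ := fun i => ∑ j, Mstar i j with hm_def
  have hm_mono : ∀ a b : Fin n, a ≤ b → m a ≤ m b := by
    intro a b hab
    apply Finset.sum_le_sum
    intro l _
    rcases eq_or_lt_of_le hab with h | h
    · rw [h]
    · exact hmono b a l h
  -- the good event
  set G : Set (Fin n → Fin n → ℝ) := {Y | ∀ i, |winCount Y i - m i| ≤ t} with hG_def
  -- deterministic analysis on the good event
  have hdet : ∀ Y ∈ G, ∀ τ : Equiv.Perm (Fin n),
      (∀ i : Fin n, ∑ l, |Mstar i l - Mstar (πCRL Y τ i) l| ≤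
        Real.sqrt n * (Real.log n) ^ 2) ∧ kmaxM Mstar ≤ (Ssel Y).card := by
    intro Y hY τ
    obtain ⟨hS1, hS2, -⟩ := hSsel Y
    have hdev : ∀ a, |winCount Y a - m a| ≤ t := hY
    have he : ∀ a b, ord Y a < ord Y b → winCount Y a ≤ winCount Y b := hord Y
    have hσT := map_unif_mem (πCRL Y) _ (hπ Y) τ
    obtain ⟨ρ, hρfix, hσ⟩ := hσT
    constructor
    · intro i
      have heq := l1_eq Mstar hmono i (πCRL Y τ i)
      rw [heq]
      have h1 : |m (ρ i) - m (πCRL Y τ i)| ≤ 2 * t := by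
        have : πCRL Y τ i = ord Y (ρ i) := by rw [hσ]; rfl
        rw [this]
        exact rank_close m (winCount Y) hm_mono (ord Y) he t hdev (ρ i)
      have h2 : |m i - m (ρ i)| ≤ Real.sqrt n * Real.log n + 2 * t := by
        by_cases hiS : i ∈ Ssel Y
        · have hρS : ρ i ∈ Ssel Y := perm_mem_of_fix ρ _ hρfix hiS
          have hNN := hS1 i hiS (ρ i) hρS
          have d1 := abs_le.mp (hdev i)
          have d2 := abs_le.mp (hdev (ρ i))
          have d3 := abs_le.mp hNN
          rw [abs_le]
          constructor <;> linarith
        · rw [hρfix i hiS]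
          simp only [sub_self, abs_zero]
          linarith
      have h3 : |m i - m (πCRL Y τ i)| ≤ Real.sqrt n * Real.log n + 4 * t :=
        calc |m i - m (πCRL Y τ i)|
            ≤ |m i - m (ρ i)| + |m (ρ i) - m (πCRL Y τ i)| := abs_sub_le _ _ _
          _ ≤ Real.sqrt n * Real.log n + 4 * t := by linarith
      have h4 : Real.sqrt n * Real.log n + 4 * t ≤ Real.sqrt n * (Real.log n) ^ 2 := by
        have hmul : Real.sqrt n * Real.log n * 2 ≤ Real.sqrt n * Real.log n * Real.log n :=
          mul_le_mul_of_nonneg_left hL2 hsl0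
        have hsq : Real.sqrt n * (Real.log n) ^ 2
            = Real.sqrt n * Real.log n * Real.log n := by ring
        rw [ht_def, hsq]
        linarith
      exact le_trans h3 h4
    · rw [kmaxM]
      apply Finset.sup_le
      intro i _
      have hfin : ({j : Fin n | Mstar j = Mstar i}).Finite := Set.toFinite _
      rw [Set.ncard_eq_toFinset_card _ hfin]
      apply hS2
      intro a ha b hb
      have hma : Mstar a = Mstar i := (hfin.mem_toFinset).mp ha
      have hmb : Mstar b = Mstar i := (hfin.mem_toFinset).mp hb
      have hmab : m a = m b := by
        simp only [hm_def]
        rw [hma, hmb]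
      have d1 := abs_le.mp (hdev a)
      have d2 := abs_le.mp (hdev b)
      rw [abs_le]
      constructor <;> rw [ht_def] at d1 d2 <;> linarith
  -- measure-theoretic conclusion
  haveI : ∀ p : Fin n × Fin n, IsProbabilityMeasure
      (bern (if p.1 = p.2 then 1 / 2 else Mstar p.1 p.2)) := by
    intro p
    by_cases h : p.1 = p.2
    · rw [if_pos h]; exact bern_prob (by norm_num) (by norm_num)
    · rw [if_neg h]; exact bern_prob (h01 p.1 p.2).1 (h01 p.1 p.2).2
  haveI : IsProbabilityMeasure (obsMeasure Mstar) := by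
    rw [obsMeasure_eq_map]
    exact Measure.isProbabilityMeasure_map (measurable_of_countable _).aemeasurable
  haveI : IsProbabilityMeasure (unifOn (Set.univ : Set (Equiv.Perm (Fin n)))) :=
    unifOn_univ_prob
  have hGmeas : MeasurableSet G := by
    have hGeq : G = ⋂ i, {Y : Fin n → Fin n → ℝ | |winCount Y i - m i| ≤ t} := by
      ext Y; simp [hG_def, Set.mem_iInter]
    rw [hGeq]
    exact MeasurableSet.iInter fun i =>
      measurableSet_le (((winCount_measurable i).sub measurable_const).abs) measurable_const
  have hGc : obsMeasure Mstar Gᶜ ≤ ENNReal.ofReal (((n:ℝ) ^ 20)⁻¹) := by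
    have hGc_eq : Gᶜ = {Y : Fin n → Fin n → ℝ |
        ¬ ∀ i, |winCount Y i - ∑ j, Mstar i j| ≤ Real.sqrt n * Real.log n / 4} := by
      ext Y; simp [hG_def, hm_def, ht_def]
    rw [hGc_eq]
    exact final_prob hn Mstar h01 hskew
  have hsubE : G ×ˢ (Set.univ : Set (Equiv.Perm (Fin n))) ⊆
      {p : (Fin n → Fin n → ℝ) × Equiv.Perm (Fin n) |
        (∀ i : Fin n, ∑ l, |Mstar i l - Mstar (πCRL p.1 p.2 i) l| ≤
          Real.sqrt n * (Real.log n) ^ 2) ∧ kmaxM Mstar ≤ (Ssel p.1).card} := by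
    rintro ⟨Y, τ⟩ ⟨hYG, -⟩
    exact hdet Y hYG τ
  calc ENNReal.ofReal (1 - ((n : ℝ) ^ 20)⁻¹)
      ≤ obsMeasure Mstar G := by
        have hε0 : (0:ℝ) ≤ ((n:ℝ) ^ 20)⁻¹ := by positivity
        have hε1 : ((n:ℝ) ^ 20)⁻¹ ≤ 1 := by
          rw [inv_le_one_iff₀]
          right
          exact one_le_pow₀ hn1
        have hsum : ENNReal.ofReal (1 - ((n:ℝ) ^ 20)⁻¹) + ENNReal.ofReal (((n:ℝ) ^ 20)⁻¹)
            = 1 := by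
          rw [← ENNReal.ofReal_add (by linarith) hε0]
          norm_num
        have h1 : (1 : ℝ≥0∞) ≤ obsMeasure Mstar G + ENNReal.ofReal (((n:ℝ) ^ 20)⁻¹) := by
          calc (1 : ℝ≥0∞) = obsMeasure Mstar G + obsMeasure Mstar Gᶜ := by rw [measure_add_measure_compl hGmeas, measure_univ]
            _ ≤ obsMeasure Mstar G + ENNReal.ofReal (((n:ℝ) ^ 20)⁻¹) :=
              add_le_add le_rfl hGc
        rw [← ENNReal.add_le_add_iff_right ENNReal.ofReal_ne_top, hsum]
        exact h1
    _ = ((obsMeasure Mstar).prod (unifOn (Set.univ : Set (Equiv.Perm (Fin n)))))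
          (G ×ˢ (Set.univ : Set (Equiv.Perm (Fin n)))) := by
        rw [Measure.prod_prod, measure_univ, mul_one]
    _ ≤ _ := measure_mono hsubE

end SSTPaper
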